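/- Let V be a finite planar reduced rooted tree and let I ⊆ J ⊆ L(V) with I and J nonempty. Let ι : J → L(V|J) be the unique order-preserving bijection (which exists since V|J has exactly #J leaves). Then (V|J)|ι(I) = V|I. -/

import Mathlib

inductive PTree : Type where
  | node : List PTree → PTree

namespace PTree

/-- the single-vertex tree -/
def x : PTree := node []

/-- the number of leaves of a tree -/
def deg : PTree → ℕ
  | node l => max 1 (l.attach.map fun t => deg t.1).sum
decreasing_by
  have := List.sizeOf_lt_of_mem t.2
  simp; omega

/-- a tree is reduced if no vertex has arity 1 -/
inductive Reduced : PTree → Prop where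
  | node (l : List PTree) (hlen : l.length ≠ 1) (h : ∀ t ∈ l, Reduced t) :
      Reduced (node l)

/-- the reduction of a tree -/
def red : PTree → PTree
  | node [t] => red t
  | node l => node (l.attach.map fun t => red t.1)
decreasing_by
  · simp; omega
  · have := List.sizeOf_lt_of_mem t.2
    simp; omega

mutual
/-- the spanning subtree `T_I` determined by a set `I ⊆ range (deg T)` of leaf positions
(counted from the left, starting at `0`) -/
def sub : PTree → Finset ℕ → PTree
  | node l, I => node (subList l I)
/-- auxiliary: the list of spanning subtrees of the children, children without
selected leaves being dropped -/
def subList : List PTree → Finset ℕ → List PTree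
  | [], _ => []
  | t :: ts, I =>
      (if (I.filter (· < t.deg)).Nonempty then [sub t (I.filter (· < t.deg))] else [])
        ++ subList ts ((I.filter fun j => t.deg ≤ j).image fun j => j - t.deg)
end

/-- the contraction `T|I`: the reduction of the spanning subtree, `1` (i.e. `none`) if `I = ∅` -/
def contract (T : PTree) (I : Finset ℕ) : Option PTree :=
  if I = ∅ then none else some (red (sub T I))



def sumdeg (l : List PTree) : ℕ := (l.map deg).sum

def shift (d : ℕ) (I : Finset ℕ) : Finset ℕ :=
  (I.filter fun j => d ≤ j).image fun j => j - d

theorem mem_shift {d n : ℕ} {I : Finset ℕ} : n ∈ shift d I ↔ n + d ∈ I := by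
  simp only [shift, Finset.mem_image, Finset.mem_filter]
  constructor
  · rintro ⟨b, ⟨hb, hd⟩, rfl⟩
    have : b - d + d = b := by omega
    rwa [this]
  · intro h
    exact ⟨n + d, ⟨h, by omega⟩, by omega⟩

theorem deg_node (l : List PTree) : deg (node l) = max 1 (sumdeg l) := by
  rw [deg, sumdeg]
  congr 1
  exact congrArg List.sum List.attach_map_val

theorem deg_pos (T : PTree) : 1 ≤ T.deg := by
  match T with
  | node l => rw [deg_node]; exact le_max_left _ _

theorem sub_node (l : List PTree) (I : Finset ℕ) : sub (node l) I = node (subList l I) := by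
  rw [sub]

theorem subList_nil (I : Finset ℕ) : subList [] I = [] := by rw [subList]

theorem subList_cons (t : PTree) (ts : List PTree) (I : Finset ℕ) :
    subList (t :: ts) I =
      (if (I.filter (· < t.deg)).Nonempty then [sub t (I.filter (· < t.deg))] else [])
        ++ subList ts (shift t.deg I) := by
  rw [subList]; rfl

theorem red_single (t : PTree) : red (node [t]) = red t := by rw [red]

theorem red_node (l : List PTree) (h : l.length ≠ 1) : red (node l) = node (l.map red) := by
  rw [red.eq_def]
  match l, h with
  | [], _ => exact congrArg node List.attach_map_val
  | a :: b :: ts, _ => exact congrArg node List.attach_map_val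

theorem red_congr (A B : List PTree) (h : A.map red = B.map red) :
    red (node A) = red (node B) := by
  have hlen : A.length = B.length := by
    have := congrArg List.length h; simpa using this
  by_cases hA : A.length = 1
  · obtain ⟨a, rfl⟩ := List.length_eq_one_iff.mp hA
    obtain ⟨b, rfl⟩ := List.length_eq_one_iff.mp (hlen ▸ hA)
    rw [red_single, red_single]
    simpa using h
  · rw [red_node A hA, red_node B (by omega)]
    exact congrArg node h

theorem subList_empty (l : List PTree) : subList l ∅ = [] := by
  induction l with
  | nil => rw [subList_nil]
  | cons t ts ih =>
    rw [subList_cons]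
    have h1 : (∅ : Finset ℕ).filter (· < t.deg) = ∅ := Finset.filter_empty _
    have h2 : shift t.deg ∅ = ∅ := by simp [shift]
    rw [h1, h2, ih]
    simp

theorem sub_empty (T : PTree) : sub T ∅ = node [] := by
  match T with
  | node l => rw [sub_node, subList_empty]

theorem sumdeg_cons (t : PTree) (ts : List PTree) : sumdeg (t :: ts) = t.deg + sumdeg ts := by
  simp [sumdeg]

theorem subList_congr (l : List PTree) (I J : Finset ℕ)
    (h : ∀ n, n < sumdeg l → (n ∈ I ↔ n ∈ J)) : subList l I = subList l J := by
  induction l generalizing I J with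
  | nil => rw [subList_nil, subList_nil]
  | cons t ts ih =>
    have hd : t.deg + sumdeg ts = sumdeg (t :: ts) := (sumdeg_cons t ts).symm
    have h1 : I.filter (· < t.deg) = J.filter (· < t.deg) := by
      ext n
      simp only [Finset.mem_filter]
      constructor
      · rintro ⟨hn, hlt⟩; exact ⟨(h n (by omega)).mp hn, hlt⟩
      · rintro ⟨hn, hlt⟩; exact ⟨(h n (by omega)).mpr hn, hlt⟩
    have h2 : subList ts (shift t.deg I) = subList ts (shift t.deg J) := by
      apply ih
      intro n hn
      rw [mem_shift, mem_shift]
      exact h (n + t.deg) (by omega)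
    rw [subList_cons, subList_cons, h1, h2]

theorem sub_filter (T : PTree) (I : Finset ℕ) : sub T I = sub T (I.filter (· < T.deg)) := by
  match T with
  | node l =>
    rw [sub_node, sub_node]
    apply congrArg node
    apply subList_congr
    intro n hn
    have : n < deg (node l) := by rw [deg_node]; omega
    simp only [Finset.mem_filter]
    exact ⟨fun h => ⟨h, this⟩, fun h => h.1⟩

mutual
theorem deg_red (T : PTree) : deg (red T) = deg T := by
  match T with
  | node [t] =>
    rw [red_single, deg_node, sumdeg_cons]
    have h1 := deg_red t
    have h2 := deg_pos t
    simp [sumdeg] at *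
    omega
  | node [] => rw [red_node _ (by simp)]; rfl
  | node (a :: b :: ts) =>
    rw [red_node _ (by simp), deg_node, deg_node, sumdeg_red]
theorem sumdeg_red (l : List PTree) : sumdeg (l.map red) = sumdeg l := by
  match l with
  | [] => rfl
  | t :: ts =>
    rw [List.map_cons, sumdeg_cons, sumdeg_cons, deg_red t, sumdeg_red ts]
end

-- counting helpers
theorem card_filter_split (I : Finset ℕ) (d a : ℕ) (h : d ≤ a) :
    (I.filter (· < a)).card
      = (I.filter (· < d)).card + (I.filter fun b => d ≤ b ∧ b < a).card := by
  have hu : I.filter (· < a) = I.filter (· < d) ∪ I.filter (fun b => d ≤ b ∧ b < a) := by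
    ext n
    simp only [Finset.mem_union, Finset.mem_filter]
    by_cases hI : n ∈ I <;> simp [hI] <;> omega
  rw [hu, Finset.card_union_of_disjoint]
  rw [Finset.disjoint_left]
  intro n hn hn'
  simp only [Finset.mem_filter] at hn hn'
  omega

theorem card_shift_filter (d m : ℕ) (J : Finset ℕ) :
    ((shift d J).filter (· < m)).card = (J.filter fun b => d ≤ b ∧ b < d + m).card := by
  have he : (shift d J).filter (· < m) = (J.filter fun b => d ≤ b ∧ b < d + m).image (· - d) := by
    ext n
    simp only [Finset.mem_filter, Finset.mem_image, mem_shift]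
    constructor
    · rintro ⟨hn, hm⟩
      refine ⟨n + d, ⟨?_, ?_, ?_⟩, by omega⟩ <;> first | exact hn | omega
    · rintro ⟨b, ⟨hb, hd, hlt⟩, rfl⟩
      constructor
      · have : b - d + d = b := by omega
        rwa [this]
      · omega
  rw [he]
  apply Finset.card_image_of_injOn
  intro a ha b hb hab
  simp only [Finset.mem_coe, Finset.mem_filter] at ha hb
  dsimp only at hab
  omega

theorem sumdeg_append (A B : List PTree) : sumdeg (A ++ B) = sumdeg A + sumdeg B := by
  simp [sumdeg]

mutual
theorem deg_sub (T : PTree) (I : Finset ℕ) (hne : I.Nonempty)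
    (hsub : I ⊆ Finset.range T.deg) : (sub T I).deg = I.card := by
  match T with
  | node l =>
    rw [sub_node, deg_node, sumdeg_subList]
    rw [deg_node] at hsub
    by_cases h : sumdeg l = 0
    · have hI : I ⊆ Finset.range 1 := by rw [h] at hsub; simpa using hsub
      have hcard : I.card = 1 :=
        le_antisymm (by simpa using Finset.card_le_card hI) hne.card_pos
      have hfe : I.filter (· < sumdeg l) = ∅ := by
        rw [h]; ext n; simp
      rw [hfe, hcard]; rfl
    · have hfil : I.filter (· < sumdeg l) = I := by
        apply Finset.filter_true_of_mem
        intro a ha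
        have := hsub ha
        rw [Finset.mem_range] at this
        omega
      rw [hfil]
      have := hne.card_pos
      omega
theorem sumdeg_subList (l : List PTree) (I : Finset ℕ) :
    sumdeg (subList l I) = (I.filter (· < sumdeg l)).card := by
  match l with
  | [] => rw [subList_nil]; simp [sumdeg]
  | t :: ts =>
    rw [subList_cons, sumdeg_append, sumdeg_subList ts (shift t.deg I),
      card_shift_filter, sumdeg_cons,
      card_filter_split I t.deg (t.deg + sumdeg ts) (by omega)]
    congr 1
    by_cases h : (I.filter (· < t.deg)).Nonempty
    · rw [if_pos h]
      have h1 : sumdeg [sub t (I.filter (· < t.deg))] = (sub t (I.filter (· < t.deg))).deg := by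
        simp [sumdeg]
      rw [h1, deg_sub t _ h]
      intro a ha
      exact Finset.mem_range.mpr (Finset.mem_filter.mp ha).2
    · rw [if_neg h, Finset.not_nonempty_iff_eq_empty.mp h]
      rfl
end

mutual
theorem red_sub_red (T : PTree) (I : Finset ℕ) :
    red (sub (red T) I) = red (sub T I) := by
  match T with
  | node [t] =>
    rw [red_single, sub_node, subList_cons, subList_nil, List.append_nil]
    have hE : sub (red t) I = sub (red t) (I.filter (· < t.deg)) := by
      rw [sub_filter (red t) I, deg_red]
    rw [hE]
    by_cases h : (I.filter (· < t.deg)).Nonempty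
    · rw [if_pos h, red_single]
      exact red_sub_red t _
    · rw [if_neg h, Finset.not_nonempty_iff_eq_empty.mp h, sub_empty]
  | node [] =>
    rw [red_node [] (by simp), List.map_nil]
  | node (a :: b :: ts) =>
    rw [red_node _ (by simp), sub_node, sub_node]
    exact red_congr _ _ (subList_red (a :: b :: ts) I)
theorem subList_red (l : List PTree) (I : Finset ℕ) :
    (subList (l.map red) I).map red = (subList l I).map red := by
  match l with
  | [] => rw [List.map_nil]
  | t :: ts =>
    rw [List.map_cons, subList_cons, subList_cons, List.map_append, List.map_append,
      deg_red]
    congr 1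
    · by_cases h : (I.filter (· < t.deg)).Nonempty
      · rw [if_pos h, if_pos h, List.map_singleton, List.map_singleton]
        exact congrArg (fun z => [z]) (red_sub_red t _)
      · rw [if_neg h, if_neg h]
    · exact subList_red ts _
end

theorem iota_lt_eq {J : Finset ℕ} {d a : ℕ} (ha : a < d) :
    J.filter (· < a) = (J.filter (· < d)).filter (· < a) := by
  ext n
  simp only [Finset.mem_filter]
  constructor
  · rintro ⟨h1, h2⟩; exact ⟨⟨h1, by omega⟩, h2⟩
  · rintro ⟨⟨h1, _⟩, h2⟩; exact ⟨h1, h2⟩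

theorem iota_lt_card {J : Finset ℕ} {d a : ℕ} (haJ : a ∈ J) (ha : a < d) :
    (J.filter (· < a)).card < (J.filter (· < d)).card := by
  apply Finset.card_lt_card
  constructor
  · intro b hb
    obtain ⟨h1, h2⟩ := Finset.mem_filter.mp hb
    exact Finset.mem_filter.mpr ⟨h1, by omega⟩
  · intro hcon
    have : a ∈ J.filter (· < a) := hcon (Finset.mem_filter.mpr ⟨haJ, ha⟩)
    have := (Finset.mem_filter.mp this).2
    omega

theorem iota_ge_eq {J : Finset ℕ} {d a : ℕ} (ha : d ≤ a) :
    (J.filter (· < a)).card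
      = (J.filter (· < d)).card + ((shift d J).filter (· < a - d)).card := by
  rw [card_shift_filter, show d + (a - d) = a from by omega,
    card_filter_split J d a ha]

mutual
theorem sub_sub (T : PTree) (I J : Finset ℕ) (hIJ : I ⊆ J) :
    sub (sub T J) (I.image fun a => (J.filter (· < a)).card) = sub T I := by
  match T with
  | node l =>
    rw [sub_node, sub_node, sub_node]
    exact congrArg node (subList_subList l I J hIJ)
theorem subList_subList (l : List PTree) (I J : Finset ℕ) (hIJ : I ⊆ J) :
    subList (subList l J) (I.image fun a => (J.filter (· < a)).card) = subList l I := by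
  match l with
  | [] => rw [subList_nil, subList_nil, subList_nil]
  | t :: ts =>
    rw [subList_cons t ts J, subList_cons t ts I]
    have hIJ1 : I.filter (· < t.deg) ⊆ J.filter (· < t.deg) :=
      Finset.filter_subset_filter _ hIJ
    have hIJ2 : shift t.deg I ⊆ shift t.deg J := by
      intro n hn
      rw [mem_shift] at hn ⊢
      exact hIJ hn
    by_cases hJ1 : (J.filter (· < t.deg)).Nonempty
    · rw [if_pos hJ1, List.singleton_append, subList_cons]
      have hc : (sub t (J.filter (· < t.deg))).deg = (J.filter (· < t.deg)).card :=
        deg_sub t _ hJ1 (fun a ha => Finset.mem_range.mpr (Finset.mem_filter.mp ha).2)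
      rw [hc]
      have key1 : ((I.image fun a => (J.filter (· < a)).card).filter
            (· < (J.filter (· < t.deg)).card))
          = (I.filter (· < t.deg)).image
              fun a => ((J.filter (· < t.deg)).filter (· < a)).card := by
        ext k
        simp only [Finset.mem_filter, Finset.mem_image]
        constructor
        · rintro ⟨⟨a, haI, rfl⟩, hk⟩
          have had : a < t.deg := by
            by_contra hge
            have := iota_ge_eq (J := J) (d := t.deg) (a := a) (by omega)
            omega
          exact ⟨a, ⟨haI, had⟩,
            (congrArg Finset.card (iota_lt_eq had)).symm⟩
        · rintro ⟨a, ⟨haI, had⟩, rfl⟩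
          have hia : (J.filter (· < a)).card
              = ((J.filter (· < t.deg)).filter (· < a)).card :=
            congrArg Finset.card (iota_lt_eq had)
          have hlt := iota_lt_card (hIJ haI) had
          exact ⟨⟨a, haI, hia⟩, by omega⟩
      have key2 : shift (J.filter (· < t.deg)).card
            (I.image fun a => (J.filter (· < a)).card)
          = (shift t.deg I).image
              fun m => ((shift t.deg J).filter (· < m)).card := by
        ext k
        rw [mem_shift]
        simp only [Finset.mem_image]
        constructor
        · rintro ⟨a, haI, hak⟩
          have hda : t.deg ≤ a := by
            by_contra hlt
            have h1 : (J.filter (· < a)).card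
                = ((J.filter (· < t.deg)).filter (· < a)).card :=
              congrArg Finset.card (iota_lt_eq (show a < t.deg by omega))
            have h2 := iota_lt_card (hIJ haI) (show a < t.deg by omega)
            omega
          have hge := iota_ge_eq (J := J) (d := t.deg) (a := a) hda
          refine ⟨a - t.deg, mem_shift.mpr ?_, by omega⟩
          rw [show a - t.deg + t.deg = a from by omega]
          exact haI
        · rintro ⟨m, hm, rfl⟩
          rw [mem_shift] at hm
          have hge := iota_ge_eq (J := J) (d := t.deg) (a := m + t.deg) (by omega)
          rw [show m + t.deg - t.deg = m from by omega] at hge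
          exact ⟨m + t.deg, hm, by omega⟩
      rw [key1, key2, subList_subList ts (shift t.deg I) (shift t.deg J) hIJ2]
      congr 1
      by_cases hI1 : (I.filter (· < t.deg)).Nonempty
      · rw [if_pos (Finset.image_nonempty.mpr hI1), if_pos hI1,
          sub_sub t (I.filter (· < t.deg)) (J.filter (· < t.deg)) hIJ1]
      · rw [if_neg (fun hcon => hI1 (Finset.image_nonempty.mp hcon)), if_neg hI1]
    · rw [if_neg hJ1, List.nil_append]
      have hJ1e : J.filter (· < t.deg) = ∅ := Finset.not_nonempty_iff_eq_empty.mp hJ1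
      have hI1e : I.filter (· < t.deg) = ∅ :=
        Finset.subset_empty.mp (hJ1e ▸ hIJ1)
      rw [if_neg (by rw [hI1e]; exact Finset.not_nonempty_empty), List.nil_append]
      have hc0 : (J.filter (· < t.deg)).card = 0 := by rw [hJ1e]; rfl
      have hK : (I.image fun a => (J.filter (· < a)).card)
          = (shift t.deg I).image fun m => ((shift t.deg J).filter (· < m)).card := by
        ext k
        simp only [Finset.mem_image]
        constructor
        · rintro ⟨a, haI, rfl⟩
          have hda : t.deg ≤ a := by
            by_contra hlt
            have : a ∈ I.filter (· < t.deg) := Finset.mem_filter.mpr ⟨haI, by omega⟩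
            rw [hI1e] at this
            exact absurd this (Finset.notMem_empty a)
          have hge := iota_ge_eq (J := J) (d := t.deg) (a := a) hda
          refine ⟨a - t.deg, mem_shift.mpr ?_, by omega⟩
          rw [show a - t.deg + t.deg = a from by omega]
          exact haI
        · rintro ⟨m, hm, rfl⟩
          rw [mem_shift] at hm
          have hge := iota_ge_eq (J := J) (d := t.deg) (a := m + t.deg) (by omega)
          rw [show m + t.deg - t.deg = m from by omega] at hge
          exact ⟨m + t.deg, hm, by omega⟩
      rw [hK]
      exact subList_subList ts (shift t.deg I) (shift t.deg J) hIJ2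
end

theorem contract_contract' (V : PTree) (I J : Finset ℕ)
    (hIJ : I ⊆ J) (hne : I.Nonempty) :
    ∃ W : PTree, V.contract J = some W ∧
      W.contract (I.image fun a => (J.filter (· < a)).card) = V.contract I := by
  have hJne : J.Nonempty := hne.mono hIJ
  refine ⟨red (sub V J), ?_, ?_⟩
  · rw [contract, if_neg (Finset.nonempty_iff_ne_empty.mp hJne)]
  · have hKne : (I.image fun a => (J.filter (· < a)).card).Nonempty :=
      Finset.image_nonempty.mpr hne
    rw [contract, contract, if_neg (Finset.nonempty_iff_ne_empty.mp hKne),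
      if_neg (Finset.nonempty_iff_ne_empty.mp hne),
      red_sub_red (sub V J) _, sub_sub V I J hIJ]

end PTree

/-- `PRT'`: finite planar rooted trees together with the empty tree `1 = none` -/
abbrev OT := Option PTree

/-- `deg` on `PRT'` -/
def degO (o : OT) : ℕ := o.elim 0 PTree.deg

/-- membership in `PRT'` = reduced trees together with the empty tree `1` -/
def ROT (o : OT) : Prop := ∀ t, o = some t → t.Reduced

/-- contraction on `PRT'` -/
def contractO : OT → Finset ℕ → OT
  | none, _ => none
  | some t, I => PTree.contract t I

/-- Let `V` be a finite planar reduced rooted tree and `I ⊆ J ⊆ L(V)` with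
`I, J` nonempty.  Let `ι : J → L(V|J)` be the unique order-preserving bijection (in leaf
coordinates, `ι a = #{b ∈ J | b < a}`).  Then `(V|J)|ι(I) = V|I`. -/
theorem contract_contract (V : PTree) (hV : V.Reduced) (I J : Finset ℕ)
    (hIJ : I ⊆ J) (hJ : J ⊆ Finset.range V.deg) (hne : I.Nonempty) :
    ∃ W : PTree, V.contract J = some W ∧
      W.contract (I.image fun a => (J.filter (· < a)).card) = V.contract I := by
  exact PTree.contract_contract' V I J hIJ hne
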